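/- Let H be a hypergraph that decomposes into matchings M_{i,j} for i ∈ [d] and j ∈ [c], each with n edges and with orderings ℓ_{i,j} respectively, where we set ℓ_{i,c} := ℓ_{i,0}. Suppose, for some x ∈ [n] and r < Δ(H), that gcd(dc, r) = d and ms(ℓ_{i,j}, ℓ_{i,j+1}) ≥ n − x for all i ∈ [d] and j ∈ [c]. Then cms_r(H) ≥ rn − x. -/

import Mathlib

/-- A hypergraph: a finite vertex type, a finite edge (label) type and an incidence
relation; distinct (parallel) edges may be incident with the same vertices. -/
structure MSHypergraph where
  V : Type
  E : Type
  fintV : Fintype V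
  fintE : Fintype E
  inc : E → V → Bool

namespace MSHypergraph

/-- The number ε of edges of `H`. -/
def edgeCard (H : MSHypergraph) : ℕ :=
  letI := H.fintE
  Fintype.card H.E

/-- The degree of a vertex: the number of edges incident with it. -/
def degree (H : MSHypergraph) (v : H.V) : ℕ :=
  letI := H.fintE
  (Finset.univ.filter (fun e => H.inc e v = true)).card

/-- The maximum degree Δ(H). -/
def maxDegree (H : MSHypergraph) : ℕ :=
  letI := H.fintV
  Finset.univ.sup H.degree

/-- An ordering (labelling) of `H`, encoded by its ε-periodic enumeration:
`f i` is the edge whose label is `i % ε`; on `[ε]`, `f` is a bijection onto the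
edge set. -/
structure IsOrdering (H : MSHypergraph) (f : ℕ → H.E) : Prop where
  periodic : ∀ i, f (i + H.edgeCard) = f i
  inj : ∀ i j, i < H.edgeCard → j < H.edgeCard → f i = f j → i = j
  surj : ∀ e : H.E, ∃ i, i < H.edgeCard ∧ f i = e

/-- The degree of `v` in the hypergraph `H(S)` formed (with multiplicity) by the
sequence `S` of `s` (cyclically) consecutive edges with labels `j, …, j+s-1`
taken modulo ε. -/
def windowDeg (H : MSHypergraph) (f : ℕ → H.E) (j s : ℕ) (v : H.V) : ℕ :=
  ((Finset.range s).filter (fun i => H.inc (f (j + i)) v = true)).card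

/-- Every sequence of `s` consecutive edges of the ordering `f` forms a hypergraph of
maximum degree at most `r`.  A window of `s` consecutive edges starts at a label `j`
with `j + s ≤ (a+1)·ε`, where `a·ε ≤ s < (a+1)·ε` (i.e. `a = s / ε`). -/
def msOK (H : MSHypergraph) (f : ℕ → H.E) (r s : ℕ) : Prop :=
  ∀ j v, j + s ≤ (s / H.edgeCard + 1) * H.edgeCard → H.windowDeg f j s v ≤ r

/-- Every sequence of `s` cyclically consecutive edges of the ordering `f` forms a
hypergraph of maximum degree at most `r`. -/
def cmsOK (H : MSHypergraph) (f : ℕ → H.E) (r s : ℕ) : Prop :=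
  ∀ j v, H.windowDeg f j s v ≤ r

/-- ms_r(ℓ): the largest `s` such that every `s` consecutive edges of `ℓ` form a
hypergraph of maximum degree at most `r`. -/
noncomputable def msrOf (H : MSHypergraph) (f : ℕ → H.E) (r : ℕ) : ℕ :=
  sSup {s | H.msOK f r s}

/-- cms_r(ℓ). -/
noncomputable def cmsrOf (H : MSHypergraph) (f : ℕ → H.E) (r : ℕ) : ℕ :=
  sSup {s | H.cmsOK f r s}

/-- ms_r(H): the maximum of ms_r(ℓ) over all orderings ℓ of H. -/
noncomputable def msr (H : MSHypergraph) (r : ℕ) : ℕ :=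
  sSup {s | ∃ f, H.IsOrdering f ∧ H.msOK f r s}

/-- cms_r(H): the maximum of cms_r(ℓ) over all orderings ℓ of H. -/
noncomputable def cmsr (H : MSHypergraph) (r : ℕ) : ℕ :=
  sSup {s | ∃ f, H.IsOrdering f ∧ H.cmsOK f r s}

end MSHypergraph

/-- `ms(ℓ, ℓ') ≥ s`, where `f` enumerates the edges of a matching with `n` edges
(in the order of its labelling ℓ) and `g` enumerates the edges of a second,
edge-disjoint matching (in the order of its labelling ℓ'): every `s` consecutive
edges of `ℓ ∨ₛ ℓ'` (the last `s-1` edges of `ℓ` followed by the first `s-1` edges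
of `ℓ'`) form a hypergraph of maximum degree at most 1, i.e. a matching. -/
def MSHypergraph.pairOK (H : MSHypergraph) (f g : ℕ → H.E) (n s : ℕ) : Prop :=
  ∀ p, p + 1 < s → ∀ v : H.V,
    ((Finset.range (s - 1 - p)).filter (fun q => H.inc (f (n - 1 - q)) v = true)).card +
    ((Finset.range (p + 1)).filter (fun q => H.inc (g q) v = true)).card ≤ 1

/-- Proposition: if `H` decomposes into matchings `M i j` (`i ∈ [d]`, `j ∈ [c]`),
each with `n` edges, `gcd(dc, r) = d`, and `ms(ℓ_{i,j}, ℓ_{i,j+1}) ≥ n - x`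
(with `ℓ_{i,c} := ℓ_{i,0}`), then `cms_r(H) ≥ rn - x`. -/
lemma sum_Ico_shift' (F : ℕ → ℕ) (w l e : ℕ) (h1 : w ≤ l) :
    ∑ m ∈ Finset.Ico l e, F m = ∑ q ∈ Finset.Ico (l - w) (e - w), F (w + q) := by
  refine Finset.sum_nbij' (fun m => m - w) (fun q => w + q) ?_ ?_ ?_ ?_ ?_ <;>
    intro a ha <;> simp only [Finset.mem_Ico] at * <;> try omega
  congr 1; omega

lemma sum_range_reflect' (F : ℕ → ℕ) (a n : ℕ) (h : a ≤ n) :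
    ∑ q ∈ Finset.range a, F (n - 1 - q) = ∑ q ∈ Finset.Ico (n - a) n, F q := by
  refine Finset.sum_nbij' (fun q => n - 1 - q) (fun q => n - 1 - q) ?_ ?_ ?_ ?_ ?_ <;>
    intro b hb <;> simp only [Finset.mem_Ico, Finset.mem_range] at * <;> omega


theorem matching_decomposition_cyclic (H : MSHypergraph) (d c n x r : ℕ)
    (M : ℕ → ℕ → ℕ → H.E)
    (hdecomp : ∀ e : H.E, ∃! p : ℕ × ℕ × ℕ,
      p.1 < d ∧ p.2.1 < c ∧ p.2.2 < n ∧ M p.1 p.2.1 p.2.2 = e)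
    (hmatch : ∀ i j, i < d → j < c → ∀ v : H.V,
      ((Finset.range n).filter (fun m => H.inc (M i j m) v = true)).card ≤ 1)
    (hx : x < n) (hr1 : 1 ≤ r) (hr : r < H.maxDegree)
    (hgcd : Nat.gcd (d * c) r = d)
    (hpair : ∀ i j, i < d → j < c →
      H.pairOK (M i j) (M i ((j + 1) % c)) n (n - x)) :
    r * n - x ≤ H.cmsr r := by
  classical
  letI := H.fintV
  letI := H.fintE
  have hn : 0 < n := by omega
  -- uniqueness of triples
  have huniq : ∀ a b q a' b' q', a < d → b < c → q < n → a' < d → b' < c → q' < n →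
      M a b q = M a' b' q' → a = a' ∧ b = b' ∧ q = q' := by
    intro a b q a' b' q' ha hb hq ha' hb' hq' heq
    have h1 := (hdecomp (M a' b' q')).unique
      (y₁ := (a, b, q)) (y₂ := (a', b', q')) ⟨ha, hb, hq, heq⟩ ⟨ha', hb', hq', rfl⟩
    simpa [Prod.ext_iff] using h1
  -- edge count
  have hcard : H.edgeCard = d * c * n := by
    have h1 : (Finset.univ : Finset H.E).card =
        ((Finset.range d) ×ˢ (Finset.range c) ×ˢ (Finset.range n)).card := by
      refine Finset.card_bij' (fun e _ => (hdecomp e).choose)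
        (fun p _ => M p.1 p.2.1 p.2.2) ?_ ?_ ?_ ?_
      · intro e _
        obtain ⟨h1, h2, h3, _⟩ := (hdecomp e).choose_spec.1
        simp only [Finset.mem_product, Finset.mem_range]
        exact ⟨h1, h2, h3⟩
      · intro p _; exact Finset.mem_univ _
      · intro e _
        exact (hdecomp e).choose_spec.1.2.2.2
      · intro p hp
        simp only [Finset.mem_product, Finset.mem_range] at hp
        exact ((hdecomp (M p.1 p.2.1 p.2.2)).choose_spec.2 p
          ⟨hp.1, hp.2.1, hp.2.2, rfl⟩).symm
    simp only [MSHypergraph.edgeCard]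
    rw [Fintype.card, h1]
    simp [Finset.card_product, Finset.card_range]; ring
  -- nonempty E
  have hrmax : r < Finset.univ.sup H.degree := hr
  obtain ⟨v₀, -, hv₀⟩ := Finset.lt_sup_iff.mp hrmax
  have hEne : Nonempty H.E := by
    have h2 : 0 < H.degree v₀ := by omega
    rw [MSHypergraph.degree] at h2
    obtain ⟨e, -⟩ := Finset.card_pos.mp h2
    exact ⟨e⟩
  have hpos : 0 < d * c * n := by
    rw [← hcard, MSHypergraph.edgeCard]
    exact Fintype.card_pos
  have hd : 0 < d := by
    rcases Nat.eq_zero_or_pos d with rfl | h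
    · simp at hpos
    · exact h
  have hc : 0 < c := by
    rcases Nat.eq_zero_or_pos c with rfl | h
    · simp at hpos
    · exact h
  -- r = d * r'
  have hdr : d ∣ r := hgcd ▸ Nat.gcd_dvd_right (d * c) r
  set r' := r / d with hr'def
  have hrr' : r = d * r' := (Nat.mul_div_cancel' hdr).symm
  have hcop : Nat.Coprime c r' := by
    have h1 : d * Nat.gcd c r' = d := by
      rw [← Nat.gcd_mul_left, ← hrr', hgcd]
    exact Nat.eq_of_mul_eq_mul_left hd (by rw [h1, mul_one])
  -- modular inverse u of r'
  obtain ⟨u, hu⟩ : ∃ u, r' * u % c = 1 % c := by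
    rcases Nat.lt_or_ge c 2 with h2 | h2
    · have hc1 : c = 1 := by omega
      subst hc1; exact ⟨0, Nat.mod_one _⟩
    · obtain ⟨m, -, hm⟩ := Nat.exists_mul_mod_eq_one_of_coprime hcop.symm h2
      exact ⟨m, by rw [hm, Nat.mod_eq_of_lt (by omega)]⟩
  -- the ordering
  set f : ℕ → H.E := fun m => M (m / n % d) (m / n / d % c * u % c) (m % n) with hfdef
  -- cancellation lemmas
  have hcancel : ∀ k, k < c → (k * u % c) * r' % c = k := by
    intro k hk
    calc (k * u % c) * r' % c = k * u * r' % c := Nat.mod_mul_mod _ _ _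
      _ = k * (r' * u) % c := by ring_nf
      _ = (k % c) * ((r' * u) % c) % c := Nat.mul_mod _ _ _
      _ = (k % c) * (1 % c) % c := by rw [hu]
      _ = k * 1 % c := (Nat.mul_mod _ _ _).symm
      _ = k := by rw [mul_one, Nat.mod_eq_of_lt hk]
  have hcancel2 : ∀ b, b < c → (b * r' % c) * u % c = b := by
    intro b hb
    calc (b * r' % c) * u % c = b * r' * u % c := Nat.mod_mul_mod _ _ _
      _ = b * (r' * u) % c := by ring_nf
      _ = (b % c) * ((r' * u) % c) % c := Nat.mul_mod _ _ _
      _ = (b % c) * (1 % c) % c := by rw [hu]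
      _ = b * 1 % c := (Nat.mul_mod _ _ _).symm
      _ = b := by rw [mul_one, Nat.mod_eq_of_lt hb]
  -- value of f on a block
  have hfval : ∀ t q, q < n → f (t * n + q) = M (t % d) (t / d % c * u % c) q := by
    intro t q hq
    have h1 : (t * n + q) / n = t := by
      rw [add_comm, Nat.add_mul_div_right _ _ hn, Nat.div_eq_of_lt hq, zero_add]
    have h2 : (t * n + q) % n = q := by
      rw [add_comm, Nat.add_mul_mod_self_right, Nat.mod_eq_of_lt hq]
    simp only [hfdef, h1, h2]
  -- successor block facts
  have hsuccd : ∀ t : ℕ, (t + r) % d = t % d := by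
    intro t; rw [hrr', Nat.add_mul_mod_self_left]
  have hsucc : ∀ t : ℕ, (t + r) / d % c * u % c = (t / d % c * u % c + 1) % c := by
    intro t
    have h1 : (t + r) / d = t / d + r' := by
      rw [hrr', Nat.add_mul_div_left _ _ hd]
    rw [h1]
    set k := t / d
    calc (k + r') % c * u % c = (k + r') * u % c := Nat.mod_mul_mod _ _ _
      _ = (k * u + r' * u) % c := by ring_nf
      _ = (k * u % c + r' * u % c) % c := Nat.add_mod _ _ _
      _ = (k * u % c + 1 % c) % c := by rw [hu]
      _ = ((k * u % c) % c + 1 % c) % c := by rw [Nat.mod_mod_of_dvd _ dvd_rfl]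
      _ = (k * u % c + 1) % c := (Nat.add_mod _ _ _).symm
      _ = (k % c * u % c + 1) % c := by rw [Nat.mod_mul_mod]
  -- the indicator function
  set g : H.V → ℕ → ℕ := fun v m => if H.inc (f m) v = true then 1 else 0 with hgdef
  have hwindow : ∀ j s v, H.windowDeg f j s v = ∑ m ∈ Finset.Ico j (j + s), g v m := by
    intro j s v
    rw [MSHypergraph.windowDeg, Finset.card_filter, Finset.sum_Ico_eq_sum_range]
    simp [hgdef]
  -- single block bound
  have hblock : ∀ v t l e, t * n ≤ l → e ≤ (t + 1) * n →
      ∑ m ∈ Finset.Ico l e, g v m ≤ 1 := by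
    intro v t l e h1 h2
    rw [sum_Ico_shift' (g v) (t * n) l e h1]
    have h4 : ∑ q ∈ Finset.Ico (l - t * n) (e - t * n), g v (t * n + q)
        ≤ ∑ q ∈ Finset.range n, g v (t * n + q) := by
      apply Finset.sum_le_sum_of_subset
      intro q hq
      simp only [Finset.mem_Ico, Finset.mem_range] at *
      have : (t + 1) * n = t * n + n := by ring
      omega
    refine h4.trans ?_
    have h5 : ∑ q ∈ Finset.range n, g v (t * n + q) =
        ((Finset.range n).filter
          (fun q => H.inc (M (t % d) (t / d % c * u % c) q) v = true)).card := by
      rw [Finset.card_filter]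
      refine Finset.sum_congr rfl fun q hq => ?_
      simp [hgdef, hfval t q (Finset.mem_range.mp hq)]
    rw [h5]
    exact hmatch _ _ (Nat.mod_lt _ hd) (Nat.mod_lt _ hc) v
  -- multi block bound
  have hmulti : ∀ k t l e v, t * n ≤ l → l ≤ (t + 1) * n → e ≤ (t + k) * n →
      ∑ m ∈ Finset.Ico l e, g v m ≤ k := by
    intro k
    induction k with
    | zero =>
      intro t l e v h1 h2 h3
      have : Finset.Ico l e = ∅ := Finset.Ico_eq_empty (by simp at h3 ⊢; omega)
      simp [this]
    | succ k ih =>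
      intro t l e v h1 h2 h3
      rcases le_or_gt e ((t + 1) * n) with h4 | h4
      · exact (hblock v t l e h1 h4).trans (by omega)
      · have h5 : (t + 1) * n ≤ e := h4.le
        rw [← Finset.sum_Ico_consecutive (g v) h2 h5]
        have hb1 := hblock v t l ((t + 1) * n) h1 le_rfl
        have hb2 := ih (t + 1) ((t + 1) * n) e v le_rfl
          (Nat.mul_le_mul_right _ (by omega)) (by
            have : t + 1 + k = t + (k + 1) := by ring
            rw [this]; exact h3)
        omega
  -- pair bound
  have hpairb : ∀ v t a b, 1 ≤ a → 1 ≤ b → a + b = n - x →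
      ∑ m ∈ Finset.Ico ((t + 1) * n - a) ((t + 1) * n), g v m +
      ∑ m ∈ Finset.Ico ((t + r) * n) ((t + r) * n + b), g v m ≤ 1 := by
    intro v t a b ha hb hab
    have han : a ≤ n := by omega
    have hbn : b ≤ n := by omega
    have htn : (t + 1) * n = t * n + n := by ring
    set I := t % d with hIdef
    set J := t / d % c * u % c with hJdef
    have hI : I < d := Nat.mod_lt _ hd
    have hJ : J < c := Nat.mod_lt _ hc
    have hp := hpair I J hI hJ (b - 1) (by omega) v
    have e1 : n - x - 1 - (b - 1) = a := by omega
    have e2 : b - 1 + 1 = b := by omega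
    rw [e1, e2] at hp
    -- first term
    have t1 : ∑ m ∈ Finset.Ico ((t + 1) * n - a) ((t + 1) * n), g v m =
        ((Finset.range a).filter (fun q => H.inc (M I J (n - 1 - q)) v = true)).card := by
      rw [sum_Ico_shift' (g v) (t * n) _ _ (by omega)]
      have e3 : (t + 1) * n - a - t * n = n - a := by omega
      have e4 : (t + 1) * n - t * n = n := by omega
      rw [e3, e4, Finset.card_filter,
        sum_range_reflect' (fun q => if H.inc (M I J q) v = true then 1 else 0) a n han]
      refine Finset.sum_congr rfl fun q hq => ?_
      simp only [Finset.mem_Ico] at hq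
      simp [hgdef, hfval t q hq.2, hIdef, hJdef]
    -- second term
    have t2 : ∑ m ∈ Finset.Ico ((t + r) * n) ((t + r) * n + b), g v m =
        ((Finset.range b).filter (fun q => H.inc (M I ((J + 1) % c) q) v = true)).card := by
      rw [sum_Ico_shift' (g v) ((t + r) * n) _ _ le_rfl]
      have e3 : (t + r) * n - (t + r) * n = 0 := by omega
      have e4 : (t + r) * n + b - (t + r) * n = b := by omega
      rw [e3, e4, Finset.card_filter, ← Finset.range_eq_Ico]
      refine Finset.sum_congr rfl fun q hq => ?_
      have hqn : q < n := lt_of_lt_of_le (Finset.mem_range.mp hq) hbn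
      have := hfval (t + r) q hqn
      rw [hsuccd t, hsucc t] at this
      simp [hgdef, this, hIdef, hJdef]
    rw [t1, t2]
    exact hp
  -- cmsOK
  have hcms : H.cmsOK f r (r * n - x) := by
    intro j v
    rw [hwindow]
    have hq : j % n < n := Nat.mod_lt _ hn
    have hj : n * (j / n) + j % n = j := Nat.div_add_mod j n
    set t₀ := j / n with ht₀
    have htn : (t₀ + 1) * n = t₀ * n + n := by ring
    have htn2 : (t₀ + r) * n = t₀ * n + r * n := by ring
    have hnt : n * t₀ = t₀ * n := by ring
    have hrn : n ≤ r * n := by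
      calc n = 1 * n := (one_mul n).symm
        _ ≤ r * n := Nat.mul_le_mul_right n hr1
    rcases le_or_gt (j % n) x with hcase | hcase
    · -- Case A
      exact hmulti r t₀ j (j + (r * n - x)) v (by omega) (by omega) (by omega)
    · -- Case B
      set a := n - j % n with hadef
      set b := j % n - x with hbdef
      have hjA : j ≤ (t₀ + 1) * n := by omega
      have hAB : (t₀ + 1) * n ≤ (t₀ + r) * n := Nat.mul_le_mul_right n (by omega)
      have hBe : (t₀ + r) * n ≤ j + (r * n - x) := by omega
      rw [← Finset.sum_Ico_consecutive (g v) (hjA.trans hAB) hBe,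
        ← Finset.sum_Ico_consecutive (g v) hjA hAB]
      have hmid := hmulti (r - 1) (t₀ + 1) ((t₀ + 1) * n) ((t₀ + r) * n) v le_rfl
        (Nat.mul_le_mul_right n (by omega)) (Nat.mul_le_mul_right n (by omega))
      have hends := hpairb v t₀ a b (by omega) (by omega) (by omega)
      have ea : (t₀ + 1) * n - a = j := by omega
      have eb : j + (r * n - x) = (t₀ + r) * n + b := by omega
      rw [ea] at hends
      rw [eb]
      omega
  -- IsOrdering
  have hord : H.IsOrdering f := by
    constructor
    · intro m
      rw [hcard]
      have h1 : (m + d * c * n) / n = m / n + d * c := Nat.add_mul_div_right _ _ hn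
      have h2 : (m + d * c * n) % n = m % n := Nat.add_mul_mod_self_right _ _ _
      simp only [hfdef, h1, h2, Nat.add_mul_mod_self_left,
        Nat.add_mul_div_left _ _ hd, Nat.add_mod_right]
    · intro i j hi hj hij
      rw [hcard] at hi hj
      simp only [hfdef] at hij
      have hiN : i / n < d * c := by
        rw [Nat.div_lt_iff_lt_mul hn]; exact hi
      have hjN : j / n < d * c := by
        rw [Nat.div_lt_iff_lt_mul hn]; exact hj
      have hik : i / n / d < c := by
        rw [Nat.div_lt_iff_lt_mul hd, mul_comm]; exact hiN
      have hjk : j / n / d < c := by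
        rw [Nat.div_lt_iff_lt_mul hd, mul_comm]; exact hjN
      obtain ⟨ea, eb, eq⟩ := huniq _ _ _ _ _ _ (Nat.mod_lt _ hd) (Nat.mod_lt _ hc)
        (Nat.mod_lt _ hn) (Nat.mod_lt _ hd) (Nat.mod_lt _ hc) (Nat.mod_lt _ hn) hij
      -- from eb recover i/n/d = j/n/d
      have hbk : i / n / d = j / n / d := by
        have h1 := hcancel (i / n / d) hik
        have h2 := hcancel (j / n / d) hjk
        rw [Nat.mod_eq_of_lt hik, Nat.mod_eq_of_lt hjk] at eb
        rw [← h1, ← h2, eb]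
      have hdiv : i / n = j / n := by
        have h1 := Nat.div_add_mod (i / n) d
        have h2 := Nat.div_add_mod (j / n) d
        rw [hbk, ea] at h1
        omega
      have h1 := Nat.div_add_mod i n
      have h2 := Nat.div_add_mod j n
      rw [hdiv, eq] at h1
      omega
    · intro e
      rw [hcard]
      obtain ⟨⟨a, b, q⟩, ⟨ha, hb, hq, heq⟩, -⟩ := hdecomp e
      dsimp only at ha hb hq heq
      refine ⟨(a + d * (b * r' % c)) * n + q, ?_, ?_⟩
      · have hk : b * r' % c < c := Nat.mod_lt _ hc
        have : a + d * (b * r' % c) < d * c := by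
          calc a + d * (b * r' % c) < d + d * (b * r' % c) := by omega
            _ = d * (b * r' % c + 1) := by ring
            _ ≤ d * c := Nat.mul_le_mul_left d (by omega)
        calc (a + d * (b * r' % c)) * n + q < (a + d * (b * r' % c)) * n + n := by omega
          _ = (a + d * (b * r' % c) + 1) * n := by ring
          _ ≤ d * c * n := Nat.mul_le_mul_right n (by omega)
      · rw [hfval _ q hq]
        have e1 : (a + d * (b * r' % c)) % d = a := by
          rw [Nat.add_mul_mod_self_left, Nat.mod_eq_of_lt ha]
        have e2 : (a + d * (b * r' % c)) / d = b * r' % c := by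
          rw [Nat.add_mul_div_left _ _ hd, Nat.div_eq_of_lt ha, zero_add]
        rw [e1, e2, Nat.mod_mod_of_dvd _ dvd_rfl, hcancel2 b hb, heq]
  -- conclusion
  have hmem : (r * n - x) ∈ {s | ∃ f, H.IsOrdering f ∧ H.cmsOK f r s} := ⟨f, hord, hcms⟩
  have hbdd : BddAbove {s | ∃ f, H.IsOrdering f ∧ H.cmsOK f r s} := by
    refine ⟨H.edgeCard, fun s' hs' => ?_⟩
    obtain ⟨f', hord', hok'⟩ := hs'
    by_contra hcon
    push_neg at hcon
    have hdeg : H.degree v₀ = H.windowDeg f' 0 H.edgeCard v₀ := by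
      rw [MSHypergraph.degree, MSHypergraph.windowDeg]
      refine (Finset.card_bij (fun i _ => f' i) ?_ ?_ ?_).symm
      · intro i hi
        simp only [Finset.mem_filter, Finset.mem_range, zero_add] at hi
        simp [hi.2]
      · intro i hi j hj hij
        simp only [Finset.mem_filter, Finset.mem_range] at hi hj
        exact hord'.inj i j hi.1 hj.1 hij
      · intro e he
        simp only [Finset.mem_filter, Finset.mem_univ, true_and] at he
        obtain ⟨i, hi, hfi⟩ := hord'.surj e
        exact ⟨i, by simp [Finset.mem_filter, Finset.mem_range, hi, zero_add, hfi, he], hfi⟩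
    have hmono : H.windowDeg f' 0 H.edgeCard v₀ ≤ H.windowDeg f' 0 s' v₀ := by
      rw [MSHypergraph.windowDeg, MSHypergraph.windowDeg]
      exact Finset.card_le_card (Finset.filter_subset_filter _
        (Finset.range_subset_range.mpr hcon.le))
    have := hok' 0 v₀
    omega
  exact le_csSup hbdd hmem
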